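/- Let K ≥ 1, let p_1,…,p_K ∈ [0,1) with p̄_k = 1 − p_k, and let λ_1,…,λ_K > 0. Define α_k = λ_k / (Σ_j λ_j). Consider the probability vector π on states {0,1,…,K} given by π_0 = (Σ_k λ_k)/(Σ_k λ_k/p̄_k) and π_k = (λ_k p_k / p̄_k)/(Σ_j λ_j/p̄_j) for k = 1,…,K. Then π is a stationary distribution of the Markov chain with transition probabilities P(0,0) = 1 − Σ_k α_k p_k, P(0,k) = α_k p_k, P(k,0) = p̄_k, P(k,k) = p_k, and P(k,l) = 0 for distinct k,l ≥ 1; that is, π satisfies πP = π and Σ_i π_i = 1. -/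

import Mathlib

theorem stmt_0 (K : ℕ) (hK : 1 ≤ K) (p lam : Fin K → ℝ)
    (hp : ∀ k, 0 ≤ p k ∧ p k < 1) (hlam : ∀ k, 0 < lam k)
    (α : Fin K → ℝ) (hα : ∀ k, α k = lam k / ∑ j, lam j)
    (π : Option (Fin K) → ℝ)
    (hπ0 : π none = (∑ k, lam k) / (∑ k, lam k / (1 - p k)))
    (hπk : ∀ k, π (some k) = (lam k * p k / (1 - p k)) / (∑ j, lam j / (1 - p j)))
    (P : Option (Fin K) → Option (Fin K) → ℝ)
    (hP00 : P none none = 1 - ∑ k, α k * p k)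
    (hP0k : ∀ k, P none (some k) = α k * p k)
    (hPk0 : ∀ k, P (some k) none = 1 - p k)
    (hPkk : ∀ k, P (some k) (some k) = p k)
    (hPkl : ∀ k l, k ≠ l → P (some k) (some l) = 0) :
    (∑ i, π i = 1) ∧ (∀ j, ∑ i, π i * P i j = π j) := by
  have hne : Nonempty (Fin K) := ⟨⟨0, hK⟩⟩
  have h1p : ∀ k, (0:ℝ) < 1 - p k := fun k => by linarith [(hp k).2]
  have h1pne : ∀ k, (1 - p k) ≠ 0 := fun k => (h1p k).ne'
  have hD : (0:ℝ) < ∑ j, lam j / (1 - p j) :=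
    Finset.sum_pos (fun j _ => div_pos (hlam j) (h1p j)) Finset.univ_nonempty
  have hS : (0:ℝ) < ∑ j, lam j :=
    Finset.sum_pos (fun j _ => hlam j) Finset.univ_nonempty
  have hDne := hD.ne'
  have hSne := hS.ne'
  have key : ∀ k, lam k + lam k * p k / (1 - p k) = lam k / (1 - p k) := fun k => by
    have := h1pne k
    field_simp
    ring
  have hsum : ∑ i, π i = 1 := by
    rw [Fintype.sum_option, hπ0]
    rw [Finset.sum_congr rfl fun k _ => hπk k]
    rw [← Finset.sum_div, ← add_div, div_eq_one_iff_eq hDne,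
      ← Finset.sum_add_distrib]
    exact Finset.sum_congr rfl fun k _ => key k
  refine ⟨hsum, fun j => ?_⟩
  cases j with
  | none =>
    rw [Fintype.sum_option, hP00, hπ0]
    rw [Finset.sum_congr rfl
      (fun k _ => show π (some k) * P (some k) none
          = lam k * p k / (∑ j, lam j / (1 - p j)) from by
        rw [hπk, hPk0]
        have := h1pne k
        field_simp)]
    have hSα : ∀ k, (∑ j, lam j) * (α k * p k) = lam k * p k := fun k => by
      rw [hα]; field_simp
    have hmain : (∑ j, lam j) * (1 - ∑ k, α k * p k)
        = (∑ j, lam j) - ∑ k, lam k * p k := by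
      rw [mul_sub, mul_one, Finset.mul_sum, Finset.sum_congr rfl fun k _ => hSα k]
    rw [div_mul_eq_mul_div, hmain, ← Finset.sum_div, ← add_div, sub_add_cancel]
  | some k =>
    rw [Fintype.sum_option, hP0k]
    have hsingle : ∑ i, π (some i) * P (some i) (some k) = π (some k) * p k := by
      rw [Finset.sum_eq_single_of_mem k (Finset.mem_univ k)
        (fun l _ hl => by rw [hPkl l k hl, mul_zero]), hPkk]
    rw [hsingle, hπ0, hπk, hα]
    have := h1pne k
    field_simp
    ring
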